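/- Let L : Δ(Π) × Λ → ℝ be affine in each argument with Δ(Π) and Λ nonempty compact convex subsets of finite-dimensional spaces. Suppose sequences (D_t)_{t≤T} and (λ_t)_{t≤T} satisfy: (i) best-response: L(D_t, λ_t) ≥ max_D L(D, λ_t) − ε for all t; and (ii) regulator regret bound: Σ_t L(D_t, λ_t) ≤ min_{λ∈Λ} Σ_t L(D_t, λ) + R_T. Then the averages D̄ = (1/T)Σ_t D_t and λ̄ = (1/T)Σ_t λ_t form a (ε + R_T/T)-approximate minimax equilibrium: max_D L(D, λ̄) − (ε + R_T/T) ≤ L(D̄, λ̄) ≤ min_λ L(D̄, λ) + (ε + R_T/T). -/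

import Mathlib

open Finset

lemma avg_affine_aux {V : Type*} [AddCommGroup V] [Module ℝ V] (g : V → ℝ)
    (hg : ∀ x y (t : ℝ), g (t • x + (1 - t) • y) = t * g x + (1 - t) * g y)
    (T : ℕ) (hT : 0 < T) (x : Fin T → V) :
    g ((T : ℝ)⁻¹ • ∑ t, x t) = (T : ℝ)⁻¹ * ∑ t, g (x t) := by
  have hsmul : ∀ (t : ℝ) x, g (t • x) = t * g x + (1 - t) * g 0 := by
    intro t x; simpa using hg x 0 t
  have hadd : ∀ x y, g (x + y) = g x + g y - g 0 := by
    intro x y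
    have h12 : (1:ℝ) - 2⁻¹ = 2⁻¹ := by norm_num
    have h1 := hg x y (2:ℝ)⁻¹
    rw [h12] at h1
    have key : (2:ℝ) • ((2:ℝ)⁻¹ • x + (2:ℝ)⁻¹ • y) = x + y := by
      rw [smul_add, smul_smul, smul_smul]; norm_num
    have h2 := hsmul 2 ((2:ℝ)⁻¹ • x + (2:ℝ)⁻¹ • y)
    rw [key, h1] at h2
    rw [h2]; ring
  have hsum : ∀ (s : Finset (Fin T)),
      g (∑ i ∈ s, x i) = (∑ i ∈ s, g (x i)) - ((s.card : ℝ) - 1) * g 0 := by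
    intro s
    induction s using Finset.induction with
    | empty => simp
    | @insert a s hnot ih =>
      rw [Finset.sum_insert hnot, Finset.sum_insert hnot, hadd, ih,
        Finset.card_insert_of_notMem hnot]
      push_cast; ring
  have hTne : (T : ℝ) ≠ 0 := by positivity
  rw [hsmul, hsum]
  simp only [Finset.card_univ, Fintype.card_fin]
  field_simp
  ring

lemma avg_mem_aux {V : Type*} [AddCommGroup V] [Module ℝ V] {S : Set V}
    (hS : Convex ℝ S) (T : ℕ) (hT : 0 < T) (x : Fin T → V) (hx : ∀ t, x t ∈ S) :
    (T : ℝ)⁻¹ • ∑ t, x t ∈ S := by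
  rw [Finset.smul_sum]
  refine hS.sum_mem (fun i _ => by positivity) ?_ (fun i _ => hx i)
  simp [Finset.card_univ]
  field_simp


/-- Freund–Schapire: best-response vs. no-regret dynamics. If the learner
`ε`-best-responds at every round and the regulator has regret at most `R_T`, then the
time averages `(D̄, λ̄)` form an `(ε + R_T/T)`-approximate minimax equilibrium of the
bi-affine game `L`. -/
theorem stmt_16
    {P : Type*} [Fintype P] [Nonempty P] (m : ℕ)
    (Λ : Set (Fin m → ℝ)) (hΛne : Λ.Nonempty) (hΛc : IsCompact Λ) (hΛconv : Convex ℝ Λ)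
    (L : (P → ℝ) → (Fin m → ℝ) → ℝ)
    -- L is affine in D for each fixed λ
    (hL1 : ∀ l D1 D2 (t : ℝ),
      L (t • D1 + (1 - t) • D2) l = t * L D1 l + (1 - t) * L D2 l)
    -- L is affine in λ for each fixed D
    (hL2 : ∀ D l1 l2 (t : ℝ),
      L D (t • l1 + (1 - t) • l2) = t * L D l1 + (1 - t) * L D l2)
    (T : ℕ) (hT : 1 ≤ T) [NeZero T]
    (ε RT : ℝ) (hε : 0 ≤ ε) (hRT : 0 ≤ RT)
    (D : Fin T → (P → ℝ)) (hD : ∀ t, D t ∈ stdSimplex ℝ P)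
    (lam : Fin T → (Fin m → ℝ)) (hlam : ∀ t, lam t ∈ Λ)
    -- (i) best-response
    (hbr : ∀ t, ∀ D' ∈ stdSimplex ℝ P, L D' (lam t) - ε ≤ L (D t) (lam t))
    -- (ii) regulator regret bound
    (hreg : ∀ l ∈ Λ, ∑ t, L (D t) (lam t) ≤ (∑ t, L (D t) l) + RT) :
    (∀ D' ∈ stdSimplex ℝ P,
        L D' ((T : ℝ)⁻¹ • ∑ t, lam t) - (ε + RT / T) ≤
          L ((T : ℝ)⁻¹ • ∑ t, D t) ((T : ℝ)⁻¹ • ∑ t, lam t)) ∧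
      (∀ l ∈ Λ,
        L ((T : ℝ)⁻¹ • ∑ t, D t) ((T : ℝ)⁻¹ • ∑ t, lam t) ≤
          L ((T : ℝ)⁻¹ • ∑ t, D t) l + (ε + RT / T)) := by
  have hTpos : 0 < T := hT
  have hTR : (0:ℝ) < T := by exact_mod_cast hTpos
  have hTne : (T:ℝ) ≠ 0 := ne_of_gt hTR
  set Db : P → ℝ := (T : ℝ)⁻¹ • ∑ t, D t with hDb
  set lb : Fin m → ℝ := (T : ℝ)⁻¹ • ∑ t, lam t with hlb
  set v : ℝ := (T : ℝ)⁻¹ * ∑ t, L (D t) (lam t) with hv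
  have hDbmem : Db ∈ stdSimplex ℝ P := avg_mem_aux (convex_stdSimplex ℝ P) T hTpos D hD
  have hlbmem : lb ∈ Λ := avg_mem_aux hΛconv T hTpos lam hlam
  have A1 : ∀ l, L Db l = (T:ℝ)⁻¹ * ∑ t, L (D t) l := fun l =>
    avg_affine_aux (fun d => L d l) (fun x y t => hL1 l x y t) T hTpos D
  have A2 : ∀ d, L d lb = (T:ℝ)⁻¹ * ∑ t, L d (lam t) := fun d =>
    avg_affine_aux (L d) (hL2 d) T hTpos lam
  -- upper bound: any simplex point's payoff against lb is at most v + ε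
  have hub : ∀ d ∈ stdSimplex ℝ P, L d lb ≤ v + ε := by
    intro d hd
    rw [A2 d]
    have hle : ∑ t, L d (lam t) ≤ ∑ t, (L (D t) (lam t) + ε) :=
      Finset.sum_le_sum fun t _ => by linarith [hbr t d hd]
    have hsplit : ∑ t : Fin T, (L (D t) (lam t) + ε) = (∑ t, L (D t) (lam t)) + T * ε := by
      rw [Finset.sum_add_distrib, Finset.sum_const, Finset.card_univ]
      simp [nsmul_eq_mul]
    have h2 : (T:ℝ)⁻¹ * ∑ t, L d (lam t) ≤ (T:ℝ)⁻¹ * ((∑ t, L (D t) (lam t)) + T * ε) := by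
      apply mul_le_mul_of_nonneg_left _ (by positivity)
      rw [← hsplit]; exact hle
    have h3 : (T:ℝ)⁻¹ * ((∑ t, L (D t) (lam t)) + T * ε) = v + ε := by
      rw [hv]; field_simp
    linarith
  -- lower bound: v ≤ L Db l + RT/T for any l ∈ Λ
  have hlow : ∀ l ∈ Λ, v ≤ L Db l + RT / T := by
    intro l hl
    have h1 := hreg l hl
    have h2 : (T:ℝ)⁻¹ * ∑ t, L (D t) (lam t) ≤ (T:ℝ)⁻¹ * ((∑ t, L (D t) l) + RT) :=
      mul_le_mul_of_nonneg_left h1 (by positivity)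
    have h3 : (T:ℝ)⁻¹ * ((∑ t, L (D t) l) + RT) = L Db l + RT / T := by
      rw [A1 l]; field_simp
    rw [hv]; linarith
  constructor
  · intro D' hD'
    have h1 := hub D' hD'
    have h2 := hlow lb hlbmem
    linarith
  · intro l hl
    have h1 := hub Db hDbmem
    have h2 := hlow l hl
    linarith
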